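/- Let p > 2 and κ > 0. There exists a constant c_1 = c_1(p,κ) > 0 such that for all real numbers a and b: |a+b|^p ≤ |a|^p + p|a|^(p-2)·a·b + (p(p-1)/2 + κ)·|a|^(p-2)·b^2 + c_1·|b|^p. -/

import Mathlib

open Real Set

/-- Key Taylor-type bound for positive `a`, small `b`. -/
lemma taylor_aux (p ε a b : ℝ) (hp : 2 < p) (hε : 0 < ε) (hε2 : ε ≤ 1/2)
    (ha : 0 < a) (hb : |b| ≤ ε * a) :
    (a + b) ^ p ≤ a ^ p + p * a ^ (p - 1) * b
      + p * (p - 1) / 2 * ((1 + ε) * a) ^ (p - 2) * b ^ 2 := by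
  have habs := abs_le.1 hb
  have hMa : (0:ℝ) < (1 + ε) * a := by nlinarith
  set M : ℝ := p * (p - 1) * ((1 + ε) * a) ^ (p - 2) with hM
  have hM0 : 0 ≤ M :=
    mul_nonneg (mul_nonneg (by linarith) (by linarith)) (rpow_nonneg hMa.le _)
  set ψ : ℝ → ℝ := fun t => (a + t * b) ^ p - a ^ p - p * a ^ (p - 1) * b * t
      - M / 2 * b ^ 2 * t ^ 2 with hψ
  have hpos : ∀ t ∈ Set.Icc (0:ℝ) 1, 0 < a + t * b := by
    intro t ht
    obtain ⟨h0, h1⟩ := ht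
    nlinarith [habs.1, habs.2]
  -- s : the interval containing a and a + t*b
  have hmemS : ∀ t ∈ Set.Icc (0:ℝ) 1, a + t * b ∈ Set.Icc (a/2) ((1+ε)*a) := by
    intro t ht
    obtain ⟨h0, h1⟩ := ht
    constructor
    · nlinarith [habs.1]
    · nlinarith [habs.2]
  have haS : a ∈ Set.Icc (a/2) ((1+ε)*a) := ⟨by linarith, by nlinarith⟩
  -- derivative of g = fun x => p * x^(p-1) on s
  have hgd : ∀ x ∈ Set.Icc (a/2) ((1+ε)*a),
      HasDerivAt (fun x : ℝ => p * x ^ (p-1)) (p * ((p-1) * x ^ (p-1-1))) x := by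
    intro x hx
    have hx0 : (0:ℝ) < x := lt_of_lt_of_le (by linarith) hx.1
    exact (Real.hasDerivAt_rpow_const (Or.inl hx0.ne')).const_mul p
  have hgbound : ∀ x ∈ Set.Icc (a/2) ((1+ε)*a),
      ‖deriv (fun x : ℝ => p * x ^ (p-1)) x‖ ≤ M := by
    intro x hx
    have hx0 : (0:ℝ) < x := lt_of_lt_of_le (by linarith) hx.1
    have he : p - 1 - 1 = p - 2 := by ring
    rw [(hgd x hx).deriv, he]
    have h1 : x ^ (p-2) ≤ ((1+ε)*a) ^ (p-2) :=
      Real.rpow_le_rpow hx0.le hx.2 (by linarith)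
    have h2 : (0:ℝ) ≤ x ^ (p-2) := rpow_nonneg hx0.le _
    rw [Real.norm_eq_abs,
      abs_of_nonneg (mul_nonneg (by linarith) (mul_nonneg (by linarith) h2))]
    have h3 := mul_le_mul_of_nonneg_left h1 (by nlinarith : (0:ℝ) ≤ p * (p-1))
    rw [hM]
    linarith
  -- Lipschitz bound for g
  have hglip : ∀ t ∈ Set.Icc (0:ℝ) 1,
      |p * (a + t*b) ^ (p-1) - p * a ^ (p-1)| ≤ M * (t * |b|) := by
    intro t ht
    have := Convex.norm_image_sub_le_of_norm_deriv_le
      (f := fun x : ℝ => p * x ^ (p-1)) (s := Set.Icc (a/2) ((1+ε)*a))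
      (fun x hx => (hgd x hx).differentiableAt) hgbound (convex_Icc _ _)
      haS (hmemS t ht)
    rw [Real.norm_eq_abs, Real.norm_eq_abs] at this
    have : |p * (a + t*b) ^ (p-1) - p * a ^ (p-1)| ≤ M * |a + t*b - a| := this
    have he : a + t*b - a = t*b := by ring
    rw [he, abs_mul, abs_of_nonneg ht.1] at this
    exact this
  -- derivative of ψ
  have hderiv : ∀ t ∈ Set.Icc (0:ℝ) 1,
      HasDerivAt ψ (p * (a + t * b) ^ (p - 1) * b - p * a ^ (p - 1) * b - M * b ^ 2 * t) t := by
    intro t ht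
    have hin : HasDerivAt (fun t : ℝ => a + t * b) b t := by
      simpa using ((hasDerivAt_id t).mul_const b).const_add a
    have h1 : HasDerivAt (fun t : ℝ => (a + t * b) ^ p) (p * (a + t * b) ^ (p - 1) * b) t := by
      exact (Real.hasDerivAt_rpow_const (Or.inl (hpos t ht).ne')).comp t hin
    have h2 : HasDerivAt (fun t : ℝ => p * a ^ (p - 1) * b * t) (p * a ^ (p - 1) * b) t := by
      simpa using (hasDerivAt_id t).const_mul (p * a ^ (p - 1) * b)
    have h3 : HasDerivAt (fun t : ℝ => M / 2 * b ^ 2 * t ^ 2) (M / 2 * b ^ 2 * (2 * t)) t := by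
      have := (hasDerivAt_pow 2 t).const_mul (M / 2 * b ^ 2)
      simpa using this
    have h := ((h1.sub_const (a ^ p)).sub h2).sub h3
    refine h.congr_deriv ?_
    ring
  have hanti : AntitoneOn ψ (Set.Icc 0 1) := by
    apply antitoneOn_of_deriv_nonpos (convex_Icc 0 1)
    · intro t ht
      exact (hderiv t ht).differentiableAt.continuousAt.continuousWithinAt
    · rw [interior_Icc]
      intro t ht
      exact (hderiv t (Set.mem_Icc_of_Ioo ht)).differentiableAt.differentiableWithinAt
    · rw [interior_Icc]
      intro t ht
      have ht' : t ∈ Set.Icc (0:ℝ) 1 := Set.mem_Icc_of_Ioo ht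
      rw [(hderiv t ht').deriv]
      have hG := hglip t ht'
      set G : ℝ := p * (a + t*b) ^ (p-1) - p * a ^ (p-1) with hGdef
      have h2 : G * b ≤ |G| * |b| := by
        calc G * b ≤ |G * b| := le_abs_self _
          _ = |G| * |b| := abs_mul _ _
      have h3 : |G| * |b| ≤ M * (t * |b|) * |b| :=
        mul_le_mul_of_nonneg_right hG (abs_nonneg b)
      have h4 : M * (t * |b|) * |b| = M * b^2 * t := by
        rw [show M * (t * |b|) * |b| = M * t * (|b| * |b|) by ring, abs_mul_abs_self]
        ring
      have : G * b ≤ M * b^2 * t := by rw [← h4]; exact h2.trans h3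
      have hexp : p * (a + t * b) ^ (p - 1) * b - p * a ^ (p - 1) * b - M * b ^ 2 * t
          = G * b - M * b^2 * t := by rw [hGdef]; ring
      rw [hexp]
      linarith
  have h01 : ψ 1 ≤ ψ 0 :=
    hanti (Set.left_mem_Icc.2 zero_le_one) (Set.right_mem_Icc.2 zero_le_one) zero_le_one
  have hψ0 : ψ 0 = 0 := by simp [hψ]
  have hψ1 : ψ 1 = (a + b) ^ p - a ^ p - p * a ^ (p - 1) * b - M / 2 * b ^ 2 := by
    simp [hψ]
  rw [hψ0, hψ1] at h01
  have : M / 2 * b ^ 2 = p * (p - 1) / 2 * ((1 + ε) * a) ^ (p - 2) * b ^ 2 := by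
    rw [hM]; ring
  linarith

lemma taylor_aux2 (p κ ε a b : ℝ) (hp : 2 < p) (hκ : 0 < κ) (hε : 0 < ε) (hε2 : ε ≤ 1/2)
    (hεpow : (1+ε)^(p-2) ≤ 1 + 2*κ/(p*(p-1)))
    (ha : 0 < a) (hb : |b| ≤ ε * a) :
    (a + b) ^ p ≤ a ^ p + p * a ^ (p - 2) * a * b
      + (p * (p - 1) / 2 + κ) * a ^ (p - 2) * b ^ 2 := by
  have h1 := taylor_aux p ε a b hp hε hε2 ha hb
  have hsplit : ((1+ε)*a)^(p-2) = (1+ε)^(p-2) * a^(p-2) :=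
    Real.mul_rpow (by linarith) ha.le
  have hlin : a ^ (p-1) = a ^ (p-2) * a := by
    rw [show p - 1 = p - 2 + 1 by ring, Real.rpow_add_one ha.ne']
  have hA : (0:ℝ) ≤ a^(p-2) := rpow_nonneg ha.le _
  have hB : (0:ℝ) ≤ b^2 := sq_nonneg b
  have hpp : (0:ℝ) < p*(p-1) := by nlinarith
  have hquad : p*(p-1)/2 * ((1+ε)*a)^(p-2) * b^2 ≤ (p*(p-1)/2 + κ) * a^(p-2) * b^2 := by
    rw [hsplit]
    have hco : p*(p-1)/2 * (1+ε)^(p-2) ≤ p*(p-1)/2 + κ := by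
      have h2 := mul_le_mul_of_nonneg_left hεpow (by positivity : (0:ℝ) ≤ p*(p-1)/2)
      have hc : p*(p-1)/2 * (1 + 2*κ/(p*(p-1))) = p*(p-1)/2 + κ := by
        field_simp [show p - 1 ≠ 0 by linarith, show p ≠ 0 by linarith]
      linarith
    have h5 := mul_le_mul_of_nonneg_right hco (mul_nonneg hA hB)
    nlinarith [h5]
  rw [hlin] at h1
  nlinarith [h1, hquad]

theorem taylor_upper_bound_abs_rpow (p κ : ℝ) (hp : 2 < p) (hκ : 0 < κ) :
    ∃ c₁ > (0:ℝ), ∀ a b : ℝ,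
      |a + b| ^ p ≤ |a| ^ p + p * |a| ^ (p - 2) * a * b
        + (p * (p - 1) / 2 + κ) * |a| ^ (p - 2) * b ^ 2 + c₁ * |b| ^ p := by
  have hppos : (0:ℝ) < p := by linarith
  have hpp : (0:ℝ) < p * (p-1) := by nlinarith
  set δ : ℝ := 2*κ/(p*(p-1)) with hδdef
  have hδ : 0 < δ := div_pos (by linarith) hpp
  have hroot : 1 < (1+δ)^(1/(p-2)) :=
    (Real.one_lt_rpow_iff_of_pos (by linarith)).2 (Or.inl ⟨by linarith, one_div_pos.2 (by linarith)⟩)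
  set ε : ℝ := min (1/2) ((1+δ)^(1/(p-2)) - 1) with hεdef
  have hε : 0 < ε := lt_min (by norm_num) (by linarith)
  have hε2 : ε ≤ 1/2 := min_le_left _ _
  have hεpow : (1+ε)^(p-2) ≤ 1 + δ := by
    have hle : 1 + ε ≤ (1+δ)^(1/(p-2)) := by
      have := min_le_right (1/2:ℝ) ((1+δ)^(1/(p-2)) - 1)
      have h2 : ε ≤ (1+δ)^(1/(p-2)) - 1 := by rw [hεdef]; exact this
      linarith
    calc (1+ε)^(p-2) ≤ ((1+δ)^(1/(p-2)))^(p-2) :=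
          Real.rpow_le_rpow (by linarith) hle (by linarith)
      _ = 1 + δ := by
          rw [← Real.rpow_mul (by linarith), one_div_mul_cancel (by linarith : p-2 ≠ 0),
            Real.rpow_one]
  set E : ℝ := 1/ε with hEdef
  have hEpos : 0 < E := by positivity
  set c₁ : ℝ := (1 + E)^p + p * E^(p-1) + 1 with hc₁def
  have hc₁ : 0 < c₁ := by
    have h1 : (0:ℝ) ≤ (1+E)^p := rpow_nonneg (by linarith) _
    have h2 : (0:ℝ) ≤ p*E^(p-1) := mul_nonneg (by linarith) (rpow_nonneg hEpos.le _)
    rw [hc₁def]; linarith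
  rw [hδdef] at hεpow
  clear_value c₁ E ε δ
  refine ⟨c₁, hc₁, ?_⟩
  intro a b
  have hBnn : (0:ℝ) ≤ |b|^p := rpow_nonneg (abs_nonneg b) p
  have hAnn : (0:ℝ) ≤ |a|^(p-2) := rpow_nonneg (abs_nonneg a) _
  have hquadnn : 0 ≤ (p*(p-1)/2 + κ) * |a|^(p-2) * b^2 :=
    mul_nonneg (mul_nonneg (by nlinarith) hAnn) (sq_nonneg b)
  by_cases hcase : |b| ≤ ε * |a|
  · rcases lt_trichotomy a 0 with hneg | rfl | hposa
    · have ha' : 0 < -a := by linarith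
      rw [abs_of_neg hneg] at hcase
      have hb' : |(-b)| ≤ ε * (-a) := by rwa [abs_neg]
      have h := taylor_aux2 p κ ε (-a) (-b) hp hκ hε hε2 hεpow ha' hb'
      have hbb := abs_le.1 hcase
      have hab : a + b < 0 := by nlinarith
      rw [abs_of_neg hab, abs_of_neg hneg]
      rw [show -(a+b) = -a + -b by ring]
      have e1 : p * (-a)^(p-2) * (-a) * (-b) = p * (-a)^(p-2) * a * b := by ring
      have e2 : ((-b):ℝ)^2 = b^2 := by ring
      rw [e1, e2] at h
      linarith [h, mul_nonneg hc₁.le hBnn]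
    · have hb0 : b = 0 := by
        have : |b| ≤ 0 := by simpa using hcase
        simpa using le_antisymm this (abs_nonneg b)
      subst hb0
      simp [Real.zero_rpow (by linarith : p ≠ 0),
        Real.zero_rpow (by linarith : p - 2 ≠ 0)]
    · rw [abs_of_pos hposa] at hcase
      have h := taylor_aux2 p κ ε a b hp hκ hε hε2 hεpow hposa hcase
      have hbb := abs_le.1 hcase
      have hab : 0 < a + b := by nlinarith
      rw [abs_of_pos hab, abs_of_pos hposa]
      linarith [h, mul_nonneg hc₁.le hBnn]
  · push_neg at hcase
    have hbne : b ≠ 0 := by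
      intro h
      rw [h, abs_zero] at hcase
      nlinarith [abs_nonneg a]
    have hbpos : 0 < |b| := abs_pos.2 hbne
    have haE : |a| ≤ E * |b| := by
      have t1 : E*(ε*|a|) ≤ E*|b| := mul_le_mul_of_nonneg_left hcase.le hEpos.le
      have t2 : E*(ε*|a|) = |a| := by rw [hEdef]; field_simp
      linarith
    have habs1 : |a+b| ≤ (1+E)*|b| := (abs_add_le a b).trans (by linarith)
    have L1 : |a+b|^p ≤ (1+E)^p * |b|^p := by
      calc |a+b|^p ≤ ((1+E)*|b|)^p :=
            Real.rpow_le_rpow (abs_nonneg _) habs1 (by linarith)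
        _ = (1+E)^p * |b|^p := Real.mul_rpow (by linarith) (abs_nonneg b)
    -- lower bound for the linear term
    have step2 : |a| ^ (p-2) * |a| = |a| ^ (p-1) := by
      by_cases ha0 : a = 0
      · simp [ha0, Real.zero_rpow (by linarith : p - 1 ≠ 0),
          Real.zero_rpow (by linarith : p - 2 ≠ 0)]
      · rw [show p - 1 = p - 2 + 1 by ring, Real.rpow_add_one (abs_ne_zero.2 ha0)]
    have step3 : |a| ^ (p-1) ≤ E^(p-1) * |b| ^ (p-1) := by
      calc |a| ^ (p-1) ≤ (E * |b|) ^ (p-1) :=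
            Real.rpow_le_rpow (abs_nonneg a) haE (by linarith)
        _ = E^(p-1) * |b| ^ (p-1) := Real.mul_rpow hEpos.le (abs_nonneg b)
    have step4 : |b| ^ (p-1) * |b| = |b| ^ p := by
      rw [← Real.rpow_add_one (abs_ne_zero.2 hbne) (p-1)]
      congr 1
      ring
    have s1 : -(|a| ^ (p-2) * (|a| * |b|)) ≤ |a| ^ (p-2) * (a*b) := by
      have habab : -(|a| * |b|) ≤ a*b := by rw [← abs_mul]; exact neg_abs_le _
      have h0 := mul_le_mul_of_nonneg_left habab hAnn
      linarith [h0]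
    have s2 : |a| ^ (p-2) * (|a| * |b|) = |a| ^ (p-1) * |b| := by
      rw [← step2]; ring
    have s3 : |a| ^ (p-1) * |b| ≤ E^(p-1) * |b| ^ (p-1) * |b| :=
      mul_le_mul_of_nonneg_right step3 (abs_nonneg b)
    have s4 : E^(p-1) * |b| ^ (p-1) * |b| = E^(p-1) * |b| ^ p := by
      rw [mul_assoc, step4]
    have s5 : -(E^(p-1) * |b| ^ p) ≤ |a| ^ (p-2) * (a*b) := by
      rw [← s4]; rw [s2] at s1; linarith
    have s6 : -(p*(E^(p-1) * |b| ^ p)) ≤ p*(|a| ^ (p-2) * (a*b)) := by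
      have := mul_le_mul_of_nonneg_left s5 hppos.le
      linarith [this]
    have hApnn : (0:ℝ) ≤ |a|^p := rpow_nonneg (abs_nonneg a) p
    have hc₁eq : c₁ * |b| ^ p = (1+E)^p * |b| ^ p + p*E^(p-1) * |b| ^ p + |b| ^ p := by
      rw [hc₁def]; ring
    linarith [L1, s6, hquadnn, hApnn, hc₁eq, hBnn]
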